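/- arXiv:1606.06911 — 2 statements merged into one kernel-verified Lean document; each statement's English description precedes it below -/
import Mathlib

section
/- Let M be an n×n complex Hermitian matrix all of whose off-diagonal entries are nonnegative real numbers. Then every entry of the matrix exponential exp(M) is a nonnegative real number. -/
open scoped ComplexOrder
open Matrix

/-- A function `f : ℝ → ℝ` is *exponentially convex* if it is continuous, nonnegative,
and for every `N`, all reals `t 1, …, t N` and complex numbers `ξ 1, …, ξ N`, the sum
`∑_{r,s} f (t r + t s) * ξ r * conj (ξ s)` is a nonnegative real number. -/
def ExponentiallyConvex (f : ℝ → ℝ) : Prop :=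
  Continuous f ∧ (∀ t : ℝ, 0 ≤ f t) ∧
    ∀ (N : ℕ) (t : Fin N → ℝ) (ξ : Fin N → ℂ),
      0 ≤ ∑ r : Fin N, ∑ s : Fin N, (f (t r + t s) : ℂ) * ξ r * (starRingEnd ℂ) (ξ s)

attribute [local instance] Matrix.linftyOpNormedRing Matrix.linftyOpNormedAlgebra

/-- the entry evaluation as a continuous linear map -/
noncomputable def entryCLM (n : ℕ) (i j : Fin n) :
    Matrix (Fin n) (Fin n) ℂ →L[ℂ] ℂ where
  toFun X := X i j
  map_add' _ _ := rfl
  map_smul' _ _ := rfl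
  cont := (continuous_apply j).comp (continuous_apply i)

lemma exp_entries_nonneg_aux (n : ℕ) (A : Matrix (Fin n) (Fin n) ℂ)
    (hA : ∀ i j, 0 ≤ A i j) (i j : Fin n) : 0 ≤ NormedSpace.exp A i j := by
  have hpow : ∀ (k : ℕ) (i j : Fin n), 0 ≤ (A ^ k) i j := by
    intro k
    induction k with
    | zero =>
      intro i j
      simp only [pow_zero, Matrix.one_apply]
      split <;> simp
    | succ k ih =>
      intro i j
      rw [pow_succ, Matrix.mul_apply]
      exact Finset.sum_nonneg fun l _ => mul_nonneg (ih i l) (hA l j)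
  have hsum : HasSum (fun k : ℕ => ((Nat.factorial k : ℂ))⁻¹ • A ^ k) (NormedSpace.exp A) :=
    NormedSpace.exp_series_hasSum_exp' (𝕂 := ℂ) A
  have hentry : HasSum (fun k : ℕ => entryCLM n i j (((Nat.factorial k : ℂ))⁻¹ • A ^ k))
      (entryCLM n i j (NormedSpace.exp A)) := hsum.mapL _
  have h0 : (0 : ℂ) ≤ entryCLM n i j (NormedSpace.exp A) := by
    refine hasSum_le (f := fun _ : ℕ => (0 : ℂ)) ?_ hasSum_zero hentry
    intro k
    show (0 : ℂ) ≤ (((Nat.factorial k : ℂ))⁻¹ • A ^ k) i j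
    rw [Matrix.smul_apply, smul_eq_mul]
    refine mul_nonneg ?_ (hpow k i j)
    have : ((Nat.factorial k : ℂ))⁻¹ = (((Nat.factorial k : ℝ))⁻¹ : ℝ) := by push_cast; ring
    rw [this]
    exact_mod_cast inv_nonneg.mpr (Nat.cast_nonneg _)
  exact h0

theorem exp_entries_nonneg (n : ℕ) (M : Matrix (Fin n) (Fin n) ℂ) (hM : M.IsHermitian)
    (hoff : ∀ i j : Fin n, i ≠ j → 0 ≤ M i j) :
    ∀ i j : Fin n, 0 ≤ NormedSpace.exp M i j := by
  intro i j
  set c : ℝ := ∑ k : Fin n, ‖M k k‖ with hc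
  set A : Matrix (Fin n) (Fin n) ℂ := M + (c : ℂ) • 1 with hAdef
  have hdiagreal : ∀ k : Fin n, (M k k).im = 0 := by
    intro k
    have := hM.apply k k
    have h2 := congrArg Complex.im this
    simp [Complex.conj_im] at h2
    linarith
  have hA : ∀ i j, 0 ≤ A i j := by
    intro i' j'
    by_cases h : i' = j'
    · subst h
      simp only [hAdef, Matrix.add_apply, Matrix.smul_apply, Matrix.one_apply_eq,
        smul_eq_mul, mul_one]
      rw [Complex.le_def]
      constructor
      · simp only [Complex.zero_re, Complex.add_re, Complex.ofReal_re]
        have h1 : ‖M i' i'‖ ≤ c := by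
          rw [hc]
          exact Finset.single_le_sum (f := fun k : Fin n => ‖M k k‖) (fun k _ => norm_nonneg _) (Finset.mem_univ i')
        have h2 : -(M i' i').re ≤ ‖M i' i'‖ := by
          calc -(M i' i').re ≤ |(M i' i').re| := neg_le_abs _
            _ ≤ ‖M i' i'‖ := Complex.abs_re_le_norm _
        linarith
      · simp [Complex.add_im, hdiagreal i', Complex.ofReal_im]
    · simp only [hAdef, Matrix.add_apply, Matrix.smul_apply, Matrix.one_apply_ne h,
        smul_eq_mul, mul_zero, add_zero]
      exact hoff _ _ h
  have hMA : M = A + (-c : ℂ) • 1 := by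
    rw [hAdef]; push_cast; ring_nf; rw [add_assoc]; simp
  have hcomm : Commute A ((-c : ℂ) • 1) := (Commute.one_right A).smul_right _
  have hsplit : NormedSpace.exp M =
      NormedSpace.exp A * NormedSpace.exp ((-c : ℂ) • 1) := by
    rw [hMA]; exact Matrix.exp_add_of_commute _ _ hcomm
  have hdiag : ((-c : ℂ) • (1 : Matrix (Fin n) (Fin n) ℂ)) =
      Matrix.diagonal (fun _ => (-c : ℂ)) := by
    ext a b
    by_cases h : a = b <;>
      simp [Matrix.smul_apply, Matrix.one_apply, Matrix.diagonal, h]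
  have hexpdiag : NormedSpace.exp ((-c : ℂ) • (1 : Matrix (Fin n) (Fin n) ℂ)) =
      Matrix.diagonal (fun _ => NormedSpace.exp (-c : ℂ)) := by
    rw [hdiag, Matrix.exp_diagonal]
    refine congrArg Matrix.diagonal (funext fun x => ?_)
    exact Pi.coe_exp _ x
  rw [hsplit, hexpdiag, Matrix.mul_diagonal]
  refine mul_nonneg (exp_entries_nonneg_aux n A hA i j) ?_
  rw [← Complex.exp_eq_exp_ℂ]
  have : Complex.exp (-c : ℂ) = ((Real.exp (-c) : ℝ) : ℂ) := by
    rw [Complex.ofReal_exp, Complex.ofReal_neg]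
  rw [this]
  exact_mod_cast (Real.exp_pos _).le
end

section
/- If f : ℝ → ℝ is exponentially convex, then either f(t) = 0 for every real t, or f(t) > 0 for every real t. -/
open scoped ComplexOrder

theorem expConvex_zero_or_pos (f : ℝ → ℝ) (hf : ExponentiallyConvex f) :
    (∀ t : ℝ, f t = 0) ∨ (∀ t : ℝ, 0 < f t) := by
  obtain ⟨-, hnn, hpsd⟩ := hf
  by_cases hz : ∃ s : ℝ, f s = 0
  · obtain ⟨s, hs⟩ := hz
    left
    intro t
    by_contra hft
    have hpos : 0 < f t := lt_of_le_of_ne (hnn t) (Ne.symm hft)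
    set x : ℝ := -(f (2 * t - s) + 1) / (2 * f t) with hx
    have key := hpsd 2 ![s / 2, t - s / 2] ![(x : ℂ), 1]
    simp only [Fin.sum_univ_two, Matrix.cons_val_zero, Matrix.cons_val_one, Matrix.head_cons,
      map_one, mul_one, one_mul, Complex.conj_ofReal] at key
    have e1 : s / 2 + s / 2 = s := by ring
    have e2 : s / 2 + (t - s / 2) = t := by ring
    have e3 : t - s / 2 + s / 2 = t := by ring
    have e4 : t - s / 2 + (t - s / 2) = 2 * t - s := by ring
    rw [e1, e2, e3, e4, hs] at key
    push_cast at key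
    have key' : (0 : ℂ) ≤ ((0 * x * x + f t * x + (f t * x + f (2 * t - s)) : ℝ) : ℂ) := by
      push_cast; convert key using 2
    rw [Complex.zero_le_real] at key'
    have : f t * x + (f t * x + f (2 * t - s)) = -1 := by
      rw [hx]; field_simp; ring
    rw [zero_mul, zero_mul, zero_add, this] at key'
    linarith
  · right
    intro t
    exact lt_of_le_of_ne (hnn t) fun h => hz ⟨t, h.symm⟩
end
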